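/- In the CRSD mechanism, when it is a family's turn to choose, the set of locations available to it (locations j with remaining capacity such that assigning the family to j preserves achievability of an α-approximation) is nonempty whenever preferences are complete, and is independent of the family's own reported preference order. -/

import Mathlib

open Classical

/-- A matching is feasible if each location `j` hosts exactly `q j` families. -/
def feasible {F L : Type} [Fintype F] [DecidableEq L] (q : L → ℕ) (μ : F → L) : Prop :=
  ∀ j : L, (Finset.univ.filter (fun i => μ i = j)).card = q j

/-- The government objective: expected number of successfully integrated families. -/
def z {F L : Type} [Fintype F] (π : F → L → ℝ) (μ : F → L) : ℝ :=
  ∑ i, π i (μ i)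

/-- `μ'` extends the partial matching `p`. -/
def ExtendsP {F L : Type} (μ' : F → L) (p : F → Option L) : Prop :=
  ∀ i j, p i = some j → μ' i = j

/-- There is a feasible completion of the partial matching `p` with objective at least `c`. -/
def okExt {F L : Type} [Fintype F] [DecidableEq L] (q : L → ℕ) (π : F → L → ℝ)
    (c : ℝ) (p : F → Option L) : Prop :=
  ∃ μ' : F → L, feasible q μ' ∧ ExtendsP μ' p ∧ c ≤ z π μ'

/-- Number of families currently assigned to location `j`. -/
def assignedCount {F L : Type} [Fintype F] [DecidableEq L] (p : F → Option L) (j : L) : ℕ :=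
  (Finset.univ.filter (fun i => p i = some j)).card

/-- One step of CRSD: family `i` is assigned to the first location in its preference list
that has remaining capacity and preserves achievability of objective value `c`. -/
noncomputable def crsdStep {F L : Type} [Fintype F] [DecidableEq F] [DecidableEq L]
    (q : L → ℕ) (π : F → L → ℝ) (c : ℝ) (prefs : F → List L)
    (p : F → Option L) (i : F) : F → Option L :=
  match (prefs i).find? (fun j =>
      decide (assignedCount p j < q j ∧ okExt q π c (Function.update p i (some j)))) with
  | some j => Function.update p i (some j)
  | none => p

/-- Running CRSD on the (random) order `order` of families, starting from the empty matching. -/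
noncomputable def crsdRun {F L : Type} [Fintype F] [DecidableEq F] [DecidableEq L]
    (q : L → ℕ) (π : F → L → ℝ) (c : ℝ) (prefs : F → List L)
    (order : List F) : F → Option L :=
  order.foldl (crsdStep q π c prefs) (fun _ => none)

/-- The set of locations available to family `i` given the partial matching `p`:
locations with remaining capacity such that assigning `i` there preserves achievability
of an `α`-approximation. -/
def Avail {F L : Type} [Fintype F] [DecidableEq F] [DecidableEq L]
    (q : L → ℕ) (π : F → L → ℝ) (c : ℝ) (p : F → Option L) (i : F) : Set L :=
  {j | assignedCount p j < q j ∧ okExt q π c (Function.update p i (some j))}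

lemma crsdStep_apply_ne {F L : Type} [Fintype F] [DecidableEq F] [DecidableEq L]
    (q : L → ℕ) (π : F → L → ℝ) (c : ℝ) (prefs : F → List L)
    (p : F → Option L) (k i : F) (h : i ≠ k) :
    crsdStep q π c prefs p k i = p i := by
  unfold crsdStep
  rcases hfind : (prefs k).find? (fun j =>
      decide (assignedCount p j < q j ∧ okExt q π c (Function.update p k (some j)))) with _ | j
  · rfl
  · exact Function.update_of_ne h _ _

lemma okExt_crsdStep {F L : Type} [Fintype F] [DecidableEq F] [DecidableEq L]
    (q : L → ℕ) (π : F → L → ℝ) (c : ℝ) (prefs : F → List L)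
    (p : F → Option L) (k : F) (h : okExt q π c p) :
    okExt q π c (crsdStep q π c prefs p k) := by
  unfold crsdStep
  rcases hfind : (prefs k).find? (fun j =>
      decide (assignedCount p j < q j ∧ okExt q π c (Function.update p k (some j)))) with _ | j
  · exact h
  · have h2 := List.find?_some hfind
    simp only [decide_eq_true_eq] at h2
    exact h2.2

lemma crsdStep_congr {F L : Type} [Fintype F] [DecidableEq F] [DecidableEq L]
    (q : L → ℕ) (π : F → L → ℝ) (c : ℝ) (prefs prefs' : F → List L)
    (p : F → Option L) (k : F) (h : prefs k = prefs' k) :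
    crsdStep q π c prefs p k = crsdStep q π c prefs' p k := by
  unfold crsdStep
  rw [h]

lemma crsd_foldl_apply_not_mem {F L : Type} [Fintype F] [DecidableEq F] [DecidableEq L]
    (q : L → ℕ) (π : F → L → ℝ) (c : ℝ) (prefs : F → List L)
    (l : List F) (p : F → Option L) (i : F) (h : i ∉ l) :
    (l.foldl (crsdStep q π c prefs) p) i = p i := by
  induction l generalizing p with
  | nil => rfl
  | cons k t ih =>
      simp only [List.mem_cons, not_or] at h
      rw [List.foldl_cons, ih _ h.2, crsdStep_apply_ne _ _ _ _ _ _ _ h.1]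

lemma crsd_foldl_congr {F L : Type} [Fintype F] [DecidableEq F] [DecidableEq L]
    (q : L → ℕ) (π : F → L → ℝ) (c : ℝ) (prefs : F → List L) (i : F) (lie : List L)
    (l : List F) (p : F → Option L) (h : i ∉ l) :
    l.foldl (crsdStep q π c prefs) p
      = l.foldl (crsdStep q π c (Function.update prefs i lie)) p := by
  induction l generalizing p with
  | nil => rfl
  | cons k t ih =>
      simp only [List.mem_cons, not_or] at h
      rw [List.foldl_cons, List.foldl_cons,
        crsdStep_congr q π c prefs (Function.update prefs i lie) p k
          (Function.update_of_ne (fun hk => h.1 hk.symm) _ _).symm]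
      exact ih _ h.2

lemma okExt_crsd_foldl {F L : Type} [Fintype F] [DecidableEq F] [DecidableEq L]
    (q : L → ℕ) (π : F → L → ℝ) (c : ℝ) (prefs : F → List L)
    (l : List F) (p : F → Option L) (h : okExt q π c p) :
    okExt q π c (l.foldl (crsdStep q π c prefs) p) := by
  induction l generalizing p with
  | nil => exact h
  | cons k t ih =>
      exact ih _ (okExt_crsdStep q π c prefs p k h)

/-- When it is family `i`'s turn in CRSD, the set of available locations is
nonempty (given complete preferences) and is independent of `i`'s own reported preference
order. -/
theorem crsd_avail_nonempty_and_report_independent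
    {F L : Type} [Fintype F] [Fintype L] [DecidableEq F] [DecidableEq L]
    (q : L → ℕ) (π : F → L → ℝ) (prefs : F → List L) (α zs : ℝ)
    (hq : ∑ j, q j = Fintype.card F)
    (hπ : ∀ i j, π i j ∈ Set.Icc (0 : ℝ) 1)
    (hα : α ∈ Set.Icc (0 : ℝ) 1)
    (hzs : IsGreatest {x : ℝ | ∃ μ : F → L, feasible q μ ∧ x = z π μ} zs)
    (hprefs : ∀ i, (prefs i).Nodup ∧ ∀ j : L, j ∈ prefs i)
    (order : List F) (horder : order.Nodup)
    (i : F) (pre rest : List F) (hsplit : order = pre ++ i :: rest)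
    (lie : List L) (hlie : lie.Nodup ∧ ∀ j : L, j ∈ lie) :
    (Avail q π (α * zs) (crsdRun q π (α * zs) prefs pre) i).Nonempty ∧
    Avail q π (α * zs) (crsdRun q π (α * zs) prefs pre) i =
      Avail q π (α * zs) (crsdRun q π (α * zs) (Function.update prefs i lie) pre) i := by
  -- i is not in pre
  have hi : i ∉ pre := by
    rw [hsplit] at horder
    have := (List.nodup_append'.mp horder).2.2
    intro hmem
    exact this hmem List.mem_cons_self
  -- initial okExt
  obtain ⟨μ, hfeas, hzμ⟩ := hzs.1
  have hzs0 : 0 ≤ zs := by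
    rw [hzμ]
    exact Finset.sum_nonneg fun k _ => (hπ k (μ k)).1
  have hαz : α * zs ≤ zs := by
    calc α * zs ≤ 1 * zs := mul_le_mul_of_nonneg_right hα.2 hzs0
    _ = zs := one_mul zs
  have hok0 : okExt q π (α * zs) (fun _ => none) := by
    refine ⟨μ, hfeas, ?_, ?_⟩
    · intro i' j h
      exact absurd h (by simp)
    · rw [← hzμ]; exact hαz
  set p := crsdRun q π (α * zs) prefs pre with hp
  have hok : okExt q π (α * zs) p :=
    okExt_crsd_foldl q π (α * zs) prefs pre _ hok0
  have hpi : p i = none :=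
    crsd_foldl_apply_not_mem q π (α * zs) prefs pre _ i hi
  constructor
  · -- nonemptiness
    obtain ⟨μ', hfeas', hext', hc'⟩ := hok
    refine ⟨μ' i, ?_, ?_⟩
    · -- capacity
      have hsub : (Finset.univ.filter (fun i' => p i' = some (μ' i)))
          ⊂ (Finset.univ.filter (fun i' => μ' i' = μ' i)) := by
        constructor
        · intro i' hi'
          simp only [Finset.mem_filter, Finset.mem_univ, true_and] at hi' ⊢
          exact hext' i' (μ' i) hi'
        · intro hsub'
          have : i ∈ Finset.univ.filter (fun i' => μ' i' = μ' i) := by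
            simp
          have := hsub' this
          simp only [Finset.mem_filter, Finset.mem_univ, true_and, hpi] at this
          exact absurd this (by simp)
      have := Finset.card_lt_card hsub
      rwa [hfeas' (μ' i)] at this
    · -- okExt after assigning i to μ' i
      refine ⟨μ', hfeas', ?_, hc'⟩
      intro i' j' h
      by_cases hii : i' = i
      · subst hii
        rw [Function.update_self] at h
        exact Option.some.inj h
      · rw [Function.update_of_ne hii] at h
        exact hext' i' j' h
  · -- report independence
    have : crsdRun q π (α * zs) prefs pre
        = crsdRun q π (α * zs) (Function.update prefs i lie) pre :=
      crsd_foldl_congr q π (α * zs) prefs i lie pre _ hi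
    rw [← this]
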